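/- Suppose a, b, c are not all of the same sign. Then the form ax² + by² + cz² represents every integer over the integers (i.e., for every integer n there exist integers x, y, z with ax² + by² + cz² = n) if and only if there exist integers x, y, z with ax² + by² + cz² ≡ -abc (mod (abc)²). -/

import Mathlib

lemma coprime_not_dvd {a b : ℤ} (hab : IsCoprime a b) {p : ℕ} (hp : p.Prime)
    (hpa : (p:ℤ) ∣ a) : ¬ (p:ℤ) ∣ b := by
  intro hpb
  obtain ⟨u, v, huv⟩ := hab
  have : (p:ℤ) ∣ 1 := by
    rw [← huv]; exact dvd_add (Dvd.dvd.mul_left hpa u) (Dvd.dvd.mul_left hpb v)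
  have := Int.le_of_dvd one_pos this
  have := hp.two_le
  omega

lemma qr_of_cong (a b c : ℤ) (hsa : Squarefree a) (hab : IsCoprime a b) (hac : IsCoprime a c)
    (p : ℕ) (hp : p.Prime) (hpa : (p:ℤ) ∣ a)
    (x y z : ℤ) (h : ((p:ℤ))^2 ∣ (a*x^2 + b*y^2 + c*z^2 + a*b*c)) :
    IsSquare (-(b*c) : ZMod p) := by
  haveI : Fact p.Prime := ⟨hp⟩
  have hpz : (p:ℤ) ≠ 0 := Int.natCast_ne_zero.2 hp.ne_zero
  obtain ⟨a1, ha1⟩ := hpa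
  have hpa1 : ¬ (p:ℤ) ∣ a1 := by
    intro ⟨a2, ha2⟩
    exact (Int.prime_iff_natAbs_prime.2 (by simpa using hp)).not_unit
      (hsa (p:ℤ) ⟨a2, by rw [ha1, ha2]; ring⟩)
  have h1 : (p:ℤ) ∣ b*y^2 + c*z^2 := by
    have hpp : (p:ℤ) ∣ (a*x^2 + b*y^2 + c*z^2 + a*b*c) :=
      dvd_trans (dvd_pow_self _ two_ne_zero) h
    have : (p:ℤ) ∣ a*x^2 + a*b*c := by
      have hpa' : (p:ℤ) ∣ a := ⟨a1, ha1⟩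
      exact dvd_add (hpa'.mul_right _) ((hpa'.mul_right _).mul_right _)
    have := dvd_sub hpp this
    convert this using 1; rfl; ring
  have h2 : (b : ZMod p)*(y:ZMod p)^2 + (c:ZMod p)*(z:ZMod p)^2 = 0 := by
    have := (ZMod.intCast_zmod_eq_zero_iff_dvd _ p).2 h1
    push_cast at this
    exact this
  by_cases hy : (y : ZMod p) = 0
  · -- p ∣ y, then p ∣ z, descend
    have hcz : (c : ZMod p) ≠ 0 := by
      intro h0
      exact coprime_not_dvd hac hp ⟨a1, ha1⟩ ((ZMod.intCast_zmod_eq_zero_iff_dvd _ p).1 h0)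
    have hz : (z : ZMod p) = 0 := by
      have : (c:ZMod p) * (z:ZMod p)^2 = 0 := by rw [← h2, hy]; ring
      rcases mul_eq_zero.1 this with h' | h'
      · exact absurd h' hcz
      · exact pow_eq_zero_iff two_ne_zero |>.1 h'
    obtain ⟨y1, hy1⟩ := (ZMod.intCast_zmod_eq_zero_iff_dvd _ p).1 hy
    obtain ⟨z1, hz1⟩ := (ZMod.intCast_zmod_eq_zero_iff_dvd _ p).1 hz
    have h3 : (p:ℤ) ∣ a1*x^2 + (p:ℤ)*(b*y1^2) + (p:ℤ)*(c*z1^2) + a1*b*c := by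
      have : (p:ℤ)*(p:ℤ) ∣ (p:ℤ) * (a1*x^2 + (p:ℤ)*(b*y1^2) + (p:ℤ)*(c*z1^2) + a1*b*c) := by
        have : a*x^2 + b*y^2 + c*z^2 + a*b*c
            = (p:ℤ) * (a1*x^2 + (p:ℤ)*(b*y1^2) + (p:ℤ)*(c*z1^2) + a1*b*c) := by
          rw [ha1, hy1, hz1]; ring
        rw [← this, ← sq]
        exact h
      exact (mul_dvd_mul_iff_left hpz).1 this
    have h4 : (a1 : ZMod p) * ((x:ZMod p)^2 + (b:ZMod p)*(c:ZMod p)) = 0 := by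
      have := (ZMod.intCast_zmod_eq_zero_iff_dvd _ p).2 h3
      push_cast at this
      rw [ZMod.natCast_self] at this
      ring_nf at this ⊢
      linear_combination this
    have ha1z : (a1 : ZMod p) ≠ 0 := fun h0 =>
      hpa1 ((ZMod.intCast_zmod_eq_zero_iff_dvd _ p).1 h0)
    rcases mul_eq_zero.1 h4 with h' | h'
    · exact absurd h' ha1z
    · exact ⟨x, by linear_combination -h'⟩
  · refine ⟨(c:ZMod p)*(z:ZMod p)*(y:ZMod p)⁻¹, ?_⟩
    have hinv : (y:ZMod p) * (y:ZMod p)⁻¹ = 1 := mul_inv_cancel₀ hy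
    have key : ((c:ZMod p)*z)^2 = -((b:ZMod p)*c) * (y:ZMod p)^2 := by
      linear_combination (c : ZMod p) * h2
    calc -((b:ZMod p)*(c:ZMod p)) = -((b:ZMod p)*c) * ((y:ZMod p) * (y:ZMod p)⁻¹)^2 := by
          rw [hinv]; ring
      _ = ((c:ZMod p)*z)^2 * ((y:ZMod p)⁻¹)^2 := by rw [key]; ring
      _ = _ := by ring

def FactOK (a b c : ℤ) (d : ℕ) : Prop := ∃ α β γ α' β' γ' : ℤ, ∀ x y z : ℤ,
  (d:ℤ) ∣ (a*x^2 + b*y^2 + c*z^2 - (α*x+β*y+γ*z)*(α'*x+β'*y+γ'*z))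

lemma dvd_prod_sub {k A B C D : ℤ} (h1 : k ∣ A - C) (h2 : k ∣ B - D) : k ∣ A*B - C*D := by
  obtain ⟨u, hu⟩ := h1; obtain ⟨v, hv⟩ := h2
  exact ⟨u*B + C*v, by linear_combination B*hu + C*hv⟩

lemma crt_pair {d e : ℕ} (h : Nat.Coprime d e) (x y : ℤ) :
    ∃ z : ℤ, (d:ℤ) ∣ (z - x) ∧ (e:ℤ) ∣ (z - y) := by
  obtain ⟨u, v, huv⟩ := Nat.isCoprime_iff_coprime.mpr h
  exact ⟨x*v*(e:ℤ) + y*u*(d:ℤ), ⟨(y-x)*u, by linear_combination x*huv⟩,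
    ⟨(x-y)*v, by linear_combination y*huv⟩⟩

lemma factok_one (a b c : ℤ) : FactOK a b c 1 :=
  ⟨0,0,0,0,0,0, fun _ _ _ => ⟨_, (one_mul _).symm⟩⟩

lemma factok_prime_dvd_left (a b c : ℤ) {p : ℕ} (hp : p.Prime) (hpa : (p:ℤ) ∣ a)
    (hab : IsCoprime a b) (hsq : IsSquare (-(b*c) : ZMod p)) : FactOK a b c p := by
  haveI : Fact p.Prime := ⟨hp⟩
  obtain ⟨s, hs⟩ := hsq
  have hbz : (b : ZMod p) ≠ 0 := by
    intro h0
    obtain ⟨u, v, huv⟩ := hab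
    have hpb := (ZMod.intCast_zmod_eq_zero_iff_dvd _ p).1 h0
    have : (p:ℤ) ∣ 1 := by
      rw [← huv]; exact dvd_add (hpa.mul_left u) (hpb.mul_left v)
    have := Int.le_of_dvd one_pos this
    have := hp.two_le
    omega
  set t : ℤ := (s.val : ℤ) with ht
  set u : ℤ := (((b : ZMod p)⁻¹).val : ℤ) with hu
  refine ⟨0, u*b, u*t, 0, b, -t, fun x y z => ?_⟩
  rw [← ZMod.intCast_zmod_eq_zero_iff_dvd]
  push_cast
  have e1 : (a : ZMod p) = 0 := by
    rwa [ZMod.intCast_zmod_eq_zero_iff_dvd]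
  have e2 : (t : ZMod p) * t = -((b:ZMod p) * c) := by
    rw [ht]; push_cast [ZMod.intCast_cast, ZMod.natCast_val]; rw [ZMod.cast_id]
    exact hs.symm
  have e3 : (u : ZMod p) * b = 1 := by
    rw [hu]; push_cast [ZMod.natCast_val, ZMod.cast_id]
    exact inv_mul_cancel₀ hbz
  push_cast at e2 e3 ⊢
  linear_combination (x:ZMod p)^2 * e1
    - ((b:ZMod p)*(y:ZMod p)^2 + (c:ZMod p)*(z:ZMod p)^2) * e3
    + (u:ZMod p)*(z:ZMod p)^2 * e2

lemma factok_mul {a b c : ℤ} {d e : ℕ} (hde : Nat.Coprime d e)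
    (hd : FactOK a b c d) (he : FactOK a b c e) : FactOK a b c (d*e) := by
  obtain ⟨α1, β1, γ1, α1', β1', γ1', h1⟩ := hd
  obtain ⟨α2, β2, γ2, α2', β2', γ2', h2⟩ := he
  obtain ⟨α, hα⟩ := crt_pair hde α1 α2
  obtain ⟨β, hβ⟩ := crt_pair hde β1 β2
  obtain ⟨γ, hγ⟩ := crt_pair hde γ1 γ2
  obtain ⟨α', hα'⟩ := crt_pair hde α1' α2'
  obtain ⟨β', hβ'⟩ := crt_pair hde β1' β2'
  obtain ⟨γ', hγ'⟩ := crt_pair hde γ1' γ2'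
  refine ⟨α, β, γ, α', β', γ', fun x y z => ?_⟩
  have key : ∀ (k : ℕ) (a1 b1 g1 a1' b1' g1' : ℤ),
      ((k:ℤ) ∣ (a*x^2 + b*y^2 + c*z^2 - (a1*x+b1*y+g1*z)*(a1'*x+b1'*y+g1'*z))) →
      ((k:ℤ) ∣ (α - a1)) → ((k:ℤ) ∣ (β - b1)) → ((k:ℤ) ∣ (γ - g1)) →
      ((k:ℤ) ∣ (α' - a1')) → ((k:ℤ) ∣ (β' - b1')) → ((k:ℤ) ∣ (γ' - g1')) →
      (k:ℤ) ∣ (a*x^2 + b*y^2 + c*z^2 - (α*x+β*y+γ*z)*(α'*x+β'*y+γ'*z)) := by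
    intro k a1 b1 g1 a1' b1' g1' hk da db dg da' db' dg'
    have hlin : (k:ℤ) ∣ ((α*x+β*y+γ*z) - (a1*x+b1*y+g1*z)) := by
      have : (α*x+β*y+γ*z) - (a1*x+b1*y+g1*z) = (α-a1)*x + (β-b1)*y + (γ-g1)*z := by ring
      rw [this]
      exact dvd_add (dvd_add (da.mul_right _) (db.mul_right _)) (dg.mul_right _)
    have hlin' : (k:ℤ) ∣ ((α'*x+β'*y+γ'*z) - (a1'*x+b1'*y+g1'*z)) := by
      have : (α'*x+β'*y+γ'*z) - (a1'*x+b1'*y+g1'*z) = (α'-a1')*x + (β'-b1')*y + (γ'-g1')*z := by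
        ring
      rw [this]
      exact dvd_add (dvd_add (da'.mul_right _) (db'.mul_right _)) (dg'.mul_right _)
    have hprod := dvd_prod_sub hlin hlin'
    have := dvd_sub hk hprod
    convert this using 1; rfl; ring
  have hdd := key d α1 β1 γ1 α1' β1' γ1' (h1 x y z) hα.1 hβ.1 hγ.1 hα'.1 hβ'.1 hγ'.1
  have hee := key e α2 β2 γ2 α2' β2' γ2' (h2 x y z) hα.2 hβ.2 hγ.2 hα'.2 hβ'.2 hγ'.2
  push_cast
  exact (Nat.isCoprime_iff_coprime.mpr hde).mul_dvd hdd hee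

lemma factok_of_dvd (a b c : ℤ) (ha : a ≠ 0) (hsa : Squarefree a) (hab : IsCoprime a b)
    (hqr : ∀ p : ℕ, p.Prime → (p:ℤ) ∣ a → IsSquare (-(b*c) : ZMod p)) :
    ∀ d : ℕ, (d:ℤ) ∣ a → FactOK a b c d := by
  intro d
  induction d using Nat.strong_induction_on with
  | _ d ih =>
    intro hd
    rcases Nat.eq_zero_or_pos d with rfl | hd0
    · exact absurd (zero_dvd_iff.mp (by exact_mod_cast hd)) ha
    rcases eq_or_lt_of_le (show 1 ≤ d from hd0) with h1 | h1
    · rw [← h1]; exact factok_one a b c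
    · have hp : d.minFac.Prime := Nat.minFac_prime (by omega)
      obtain ⟨e, he⟩ := d.minFac_dvd
      have hsd : Squarefree (d:ℤ) := hsa.squarefree_of_dvd hd
      have hpe : ¬ d.minFac ∣ e := by
        intro ⟨f, hf⟩
        refine (Int.prime_iff_natAbs_prime.2 (by simpa using hp)).not_unit
          (hsd (d.minFac : ℤ) ⟨(f:ℤ), ?_⟩)
        rw [hf] at he
        have : d = d.minFac * d.minFac * f := he.trans (by ring)
        exact_mod_cast congrArg (Nat.cast : ℕ → ℤ) this
      have hcop : Nat.Coprime d.minFac e := (hp.coprime_iff_not_dvd).2 hpe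
      have hed : (e:ℤ) ∣ a := dvd_trans (by exact_mod_cast Dvd.intro_left _ he.symm) hd
      have hepos : 0 < e := by
        rcases Nat.eq_zero_or_pos e with rfl | h; · omega
        exact h
      have helt : e < d := by
        have h2 := hp.two_le
        calc e < 2 * e := by omega
          _ ≤ d.minFac * e := by exact Nat.mul_le_mul_right e h2
          _ = d := he.symm
      have hpa : (d.minFac : ℤ) ∣ a := dvd_trans (by exact_mod_cast d.minFac_dvd) hd
      rw [he]
      exact factok_mul hcop (factok_prime_dvd_left a b c hp hpa hab (hqr _ hp hpa))
        (ih e helt hed)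

lemma factok_swap12 {a b c : ℤ} {d : ℕ} (h : FactOK a b c d) : FactOK b a c d := by
  obtain ⟨α, β, γ, α', β', γ', hf⟩ := h
  refine ⟨β, α, γ, β', α', γ', fun x y z => ?_⟩
  have := hf y x z
  convert this using 1; ring

lemma factok_swap13 {a b c : ℤ} {d : ℕ} (h : FactOK a b c d) : FactOK c b a d := by
  obtain ⟨α, β, γ, α', β', γ', hf⟩ := h
  refine ⟨γ, β, α, γ', β', α', fun x y z => ?_⟩
  have := hf z y x
  convert this using 1; ring

lemma natabs_coprime {a b : ℤ} (h : IsCoprime a b) : Nat.Coprime a.natAbs b.natAbs :=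
  Int.isCoprime_iff_gcd_eq_one.mp h

lemma factok_abc (a b c : ℤ) (ha : a ≠ 0) (hb : b ≠ 0) (hc : c ≠ 0)
    (hsa : Squarefree a) (hsb : Squarefree b) (hsc : Squarefree c)
    (hab : IsCoprime a b) (hac : IsCoprime a c) (hbc : IsCoprime b c)
    (hqra : ∀ p : ℕ, p.Prime → (p:ℤ) ∣ a → IsSquare (-(b*c) : ZMod p))
    (hqrb : ∀ p : ℕ, p.Prime → (p:ℤ) ∣ b → IsSquare (-(a*c) : ZMod p))
    (hqrc : ∀ p : ℕ, p.Prime → (p:ℤ) ∣ c → IsSquare (-(a*b) : ZMod p)) :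
    FactOK a b c (a.natAbs * b.natAbs * c.natAbs) := by
  have h1 : FactOK a b c a.natAbs :=
    factok_of_dvd a b c ha hsa hab hqra a.natAbs (Int.natAbs_dvd.mpr dvd_rfl)
  have h2 : FactOK a b c b.natAbs := by
    refine factok_swap12 (factok_of_dvd b a c hb hsb hab.symm ?_ b.natAbs
      (Int.natAbs_dvd.mpr dvd_rfl))
    intro p hp hpb
    exact hqrb p hp hpb
  have h3 : FactOK a b c c.natAbs := by
    refine factok_swap13 (factok_of_dvd c b a hc hsc hbc.symm ?_ c.natAbs
      (Int.natAbs_dvd.mpr dvd_rfl))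
    intro p hp hpc
    simpa [mul_comm] using hqrc p hp hpc
  exact factok_mul ((natabs_coprime hac).mul (natabs_coprime hbc))
    (factok_mul (natabs_coprime hab) h1 h2) h3


lemma unit_sq_int {t : ℤ} (h : IsUnit t) : t^2 = 1 := by
  rcases Int.isUnit_iff.1 h with rfl | rfl <;> norm_num

lemma sq_eq_of_squarefree {d t : ℤ} (hsq : Squarefree d) (hd : d ≠ 0) (h : t^2 = d) :
    d = 1 := by
  have : IsUnit t := hsq t ⟨1, by rw [← h]; ring⟩
  rw [← h, unit_sq_int this]

lemma squarefree_neg' {a : ℤ} (h : Squarefree a) : Squarefree (-a) :=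
  fun x hx => h x (dvd_neg.mp hx)

lemma exists_isotropic (a b c : ℤ) (ha : 0 < a) (hb : b < 0) (hc : c < 0)
    (hsa : Squarefree a) (hsb : Squarefree b) (hsc : Squarefree c)
    (hab : IsCoprime a b) (hac : IsCoprime a c) (hbc : IsCoprime b c)
    (hfact : FactOK a b c (a.natAbs * (b.natAbs * c.natAbs))) :
    ∃ x y z : ℤ, ¬(x = 0 ∧ y = 0 ∧ z = 0) ∧ a*x^2 + b*y^2 + c*z^2 = 0 := by
  -- dispatch special small cases
  by_cases hab1 : a = 1 ∧ b = -1
  · exact ⟨1, 1, 0, by simp, by rw [hab1.1, hab1.2]; ring⟩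
  by_cases hac1 : a = 1 ∧ c = -1
  · exact ⟨1, 0, 1, by simp, by rw [hac1.1, hac1.2]; ring⟩
  obtain ⟨α, β, γ, α', β', γ', hLL⟩ := hfact
  set an := a.natAbs with han
  set bn := b.natAbs with hbn
  set cn := c.natAbs with hcn
  have hacast : (an : ℤ) = a := Int.natAbs_of_nonneg ha.le
  have hbcast : (bn : ℤ) = -b := by
    rw [hbn, Int.ofNat_natAbs_of_nonpos hb.le]
  have hccast : (cn : ℤ) = -c := by
    rw [hcn, Int.ofNat_natAbs_of_nonpos hc.le]
  have han1 : 1 ≤ an := Int.natAbs_pos.2 ha.ne'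
  have hbn1 : 1 ≤ bn := Int.natAbs_pos.2 hb.ne
  have hcn1 : 1 ≤ cn := Int.natAbs_pos.2 hc.ne
  set m : ℕ := an * (bn * cn) with hm
  have hm1 : 1 ≤ m := by
    calc 1 = 1*(1*1) := by norm_num
      _ ≤ an*(bn*cn) := Nat.mul_le_mul han1 (Nat.mul_le_mul hbn1 hcn1)
  haveI : NeZero m := ⟨by omega⟩
  have hMcast : (m : ℤ) = a*b*c := by
    rw [hm]; push_cast; rw [hacast, hbcast, hccast]; ring
  set P := Nat.sqrt (bn*cn - 1) with hP
  set Q := Nat.sqrt (an*cn) with hQ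
  set R := Nat.sqrt (an*bn) with hR
  -- counting
  have hcount : m < (P+1) * ((Q+1) * (R+1)) := by
    by_contra hcon
    push_neg at hcon
    have h1 : bn*cn ≤ (P+1)*(P+1) := by
      have := Nat.lt_succ_sqrt (bn*cn - 1)
      have : bn*cn - 1 < (P+1)*(P+1) := this
      omega
    have h2 : an*cn + 1 ≤ (Q+1)*(Q+1) := Nat.lt_succ_sqrt (an*cn)
    have h3 : an*bn + 1 ≤ (R+1)*(R+1) := Nat.lt_succ_sqrt (an*bn)
    have hsq : ((P+1) * ((Q+1) * (R+1))) * ((P+1) * ((Q+1) * (R+1))) ≤ m * m :=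
      Nat.mul_le_mul hcon hcon
    have hbig : (bn*cn) * ((an*cn + 1) * ((an*bn) + 1)) ≤
        ((P+1) * ((Q+1) * (R+1))) * ((P+1) * ((Q+1) * (R+1))) := by
      calc (bn*cn) * ((an*cn + 1) * ((an*bn) + 1))
          ≤ ((P+1)*(P+1)) * (((Q+1)*(Q+1)) * ((R+1)*(R+1))) :=
            Nat.mul_le_mul h1 (Nat.mul_le_mul h2 h3)
        _ = ((P+1) * ((Q+1) * (R+1))) * ((P+1) * ((Q+1) * (R+1))) := by ring
    have hle : (bn*cn) * ((an*cn + 1) * ((an*bn) + 1)) ≤ m*m := le_trans hbig hsq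
    have expand : bn*cn*((an*cn+1)*(an*bn+1)) = m*m + bn*cn*(an*cn+an*bn+1) := by
      rw [hm]; ring
    rw [expand] at hle
    have hpos : 1 ≤ bn*cn*(an*cn+an*bn+1) := by
      have : bn*cn*(an*cn+an*bn+1) ≠ 0 := by positivity
      omega
    linarith
  -- pigeonhole
  set box : Finset (ℕ × ℕ × ℕ) :=
    (Finset.range (P+1)) ×ˢ ((Finset.range (Q+1)) ×ˢ (Finset.range (R+1))) with hbox
  have hboxcard : box.card = (P+1) * ((Q+1) * (R+1)) := by
    simp [hbox, Finset.card_product]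
  have hmapsto : ∀ v ∈ box, (fun v : ℕ × ℕ × ℕ =>
      ((α * v.1 + β * v.2.1 + γ * v.2.2 : ℤ) : ZMod m)) v ∈ (Finset.univ : Finset (ZMod m)) :=
    fun v _ => Finset.mem_univ _
  have hcardlt : (Finset.univ : Finset (ZMod m)).card < box.card := by
    rw [hboxcard, Finset.card_univ, ZMod.card]
    exact hcount
  obtain ⟨v, hv, w, hw, hvw, heq⟩ :=
    Finset.exists_ne_map_eq_of_card_lt_of_maps_to hcardlt hmapsto
  set dx : ℤ := (v.1 : ℤ) - w.1 with hdx
  set dy : ℤ := (v.2.1 : ℤ) - w.2.1 with hdy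
  set dz : ℤ := (v.2.2 : ℤ) - w.2.2 with hdz
  have hdnz : ¬(dx = 0 ∧ dy = 0 ∧ dz = 0) := by
    rintro ⟨h1, h2, h3⟩
    apply hvw
    have e1 : v.1 = w.1 := by exact_mod_cast sub_eq_zero.1 h1
    have e2 : v.2.1 = w.2.1 := by exact_mod_cast sub_eq_zero.1 h2
    have e3 : v.2.2 = w.2.2 := by exact_mod_cast sub_eq_zero.1 h3
    exact Prod.ext e1 (Prod.ext e2 e3)
  -- modular divisibility
  have hLdvd : (m:ℤ) ∣ (α * dx + β * dy + γ * dz) := by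
    rw [← ZMod.intCast_zmod_eq_zero_iff_dvd]
    push_cast
    rw [hdx, hdy, hdz]
    push_cast
    have := sub_eq_zero.2 heq
    push_cast at this
    linear_combination this
  have hFdvd : (m:ℤ) ∣ (a*dx^2 + b*dy^2 + c*dz^2) := by
    have h1 := hLL dx dy dz
    have h2 : (m:ℤ) ∣ (α*dx+β*dy+γ*dz)*(α'*dx+β'*dy+γ'*dz) := hLdvd.mul_right _
    have := dvd_add h1 h2
    convert this using 1
    rfl
    push_cast [hm]
    ring
  -- bounds
  have hxb : dx^2 ≤ (bn:ℤ)*cn - 1 := by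
    have hv1 : v.1 < P + 1 := by
      have := (Finset.mem_product.1 hv).1; simpa using this
    have hw1 : w.1 < P + 1 := by
      have := (Finset.mem_product.1 hw).1; simpa using this
    have h1 : dx ≤ (P:ℤ) := by rw [hdx]; push_cast; omega
    have h2 : -(P:ℤ) ≤ dx := by rw [hdx]; push_cast; omega
    have h3 : dx^2 ≤ (P:ℤ)^2 := sq_le_sq' h2 h1
    have h4 : (P:ℤ)^2 ≤ (bn:ℤ)*cn - 1 := by
      have h5 : P^2 ≤ bn*cn - 1 := Nat.sqrt_le' (bn*cn - 1)
      have h6 : ((P^2 : ℕ) : ℤ) ≤ ((bn*cn - 1 : ℕ) : ℤ) := Int.ofNat_le.mpr h5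
      have h7 : ((bn*cn - 1 : ℕ) : ℤ) = (bn:ℤ)*(cn:ℤ) - 1 := by
        rw [Nat.cast_sub (Nat.mul_le_mul hbn1 hcn1)]; push_cast; ring
      rw [h7] at h6
      exact_mod_cast h6
    linarith
  have hyb : dy^2 ≤ (an:ℤ)*cn := by
    have hv1 : v.2.1 < Q + 1 := by
      have := (Finset.mem_product.1 (Finset.mem_product.1 hv).2).1; simpa using this
    have hw1 : w.2.1 < Q + 1 := by
      have := (Finset.mem_product.1 (Finset.mem_product.1 hw).2).1; simpa using this
    have h1 : dy ≤ (Q:ℤ) := by rw [hdy]; push_cast; omega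
    have h2 : -(Q:ℤ) ≤ dy := by rw [hdy]; push_cast; omega
    have h3 : dy^2 ≤ (Q:ℤ)^2 := sq_le_sq' h2 h1
    have h4 : (Q:ℤ)^2 ≤ (an:ℤ)*cn := by
      have h5 : Q^2 ≤ an*cn := Nat.sqrt_le' (an*cn)
      exact_mod_cast Int.ofNat_le.mpr h5
    linarith
  have hzb : dz^2 ≤ (an:ℤ)*bn := by
    have hv1 : v.2.2 < R + 1 := by
      have := (Finset.mem_product.1 (Finset.mem_product.1 hv).2).2; simpa using this
    have hw1 : w.2.2 < R + 1 := by
      have := (Finset.mem_product.1 (Finset.mem_product.1 hw).2).2; simpa using this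
    have h1 : dz ≤ (R:ℤ) := by rw [hdz]; push_cast; omega
    have h2 : -(R:ℤ) ≤ dz := by rw [hdz]; push_cast; omega
    have h3 : dz^2 ≤ (R:ℤ)^2 := sq_le_sq' h2 h1
    have h4 : (R:ℤ)^2 ≤ (an:ℤ)*bn := by
      have h5 : R^2 ≤ an*bn := Nat.sqrt_le' (an*bn)
      exact_mod_cast Int.ofNat_le.mpr h5
    linarith
  -- value analysis
  clear hLL heq hmapsto hcardlt hboxcard hcount hv hw hvw
  set F : ℤ := a*dx^2 + b*dy^2 + c*dz^2 with hF
  set M : ℤ := a*b*c with hMdef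
  have hMpos : 0 < M := by nlinarith
  have hub : F ≤ M - a := by
    have e1 : a*dx^2 ≤ a*((bn:ℤ)*cn - 1) := by
      apply mul_le_mul_of_nonneg_left hxb ha.le
    have e2 : b*dy^2 ≤ 0 := mul_nonpos_of_nonpos_of_nonneg hb.le (sq_nonneg _)
    have e3 : c*dz^2 ≤ 0 := mul_nonpos_of_nonpos_of_nonneg hc.le (sq_nonneg _)
    have : a*((bn:ℤ)*cn - 1) = M - a := by
      rw [hMdef]
      rw [hbcast, hccast]; ring
    linarith
  have hlb1 : b*dy^2 ≥ -M := by
    have : b*dy^2 ≥ b*((an:ℤ)*cn) := by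
      apply mul_le_mul_of_nonpos_left hyb hb.le
    have e : b*((an:ℤ)*cn) = -M := by rw [hMdef, hacast, hccast]; ring
    linarith
  have hlb2 : c*dz^2 ≥ -M := by
    have : c*dz^2 ≥ c*((an:ℤ)*bn) := by
      apply mul_le_mul_of_nonpos_left hzb hc.le
    have e : c*((an:ℤ)*bn) = -M := by rw [hMdef, hacast, hbcast]; ring
    linarith
  have hlb : F ≥ -2*M + a*dx^2 := by
    have hFe : F = a*dx^2 + b*dy^2 + c*dz^2 := hF
    linarith [hlb1, hlb2]
  have hxnn : 0 ≤ a*dx^2 := mul_nonneg ha.le (sq_nonneg _)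
  -- F = M * k with -2 ≤ k ≤ 0
  obtain ⟨k, hk⟩ : M ∣ F := by
    have : (m:ℤ) ∣ F := hFdvd
    rwa [hMcast] at this
  have hkbound : k = 0 ∨ k = -1 ∨ k = -2 := by
    have h1 : M * k ≤ M - a := by rw [← hk]; exact hub
    have h2 : -2*M ≤ M * k := by rw [← hk]; linarith
    have hk0 : k < 1 := by
      have h3 : M * k < M * 1 := by linarith
      exact lt_of_mul_lt_mul_left h3 hMpos.le
    have hk2 : -2 ≤ k := by
      have h3 : M * (-2) ≤ M * k := by linarith
      exact le_of_mul_le_mul_left h3 hMpos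
    omega
  rcases hkbound with rfl0 | h | h
  · -- F = 0
    subst rfl0
    exact ⟨dx, dy, dz, hdnz, by rw [← hF, hk]; ring⟩
  · -- F = -M
    subst h
    have hFeq : a*dx^2 + b*dy^2 + c*dz^2 = -(a*b*c) := by
      rw [← hF, hk, hMdef]; ring
    have hZ : dz^2 + a*b ≠ 0 := by
      intro h0
      have hsq2 : (-dz)^2 = a * (-b) := by linear_combination h0
      have hsab : Squarefree (a * (-b)) := by
        rw [squarefree_mul_iff]
        exact ⟨(hab.neg_right).isRelPrime, hsa, squarefree_neg' hsb⟩
      have hone := sq_eq_of_squarefree hsab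
        (mul_pos ha (by linarith : (0:ℤ) < -b)).ne' hsq2
      have e1 : a = 1 := Int.eq_one_of_mul_eq_one_right ha.le hone
      have e2 : b = -1 := by
        have := Int.eq_one_of_mul_eq_one_left (by linarith : (0:ℤ) ≤ -b) hone
        linarith
      exact hab1 ⟨e1, e2⟩
    refine ⟨dx*dz - b*dy, dy*dz + a*dx, dz^2 + a*b, ?_, ?_⟩
    · rintro ⟨_, _, h3⟩; exact hZ h3
    · linear_combination (dz^2 + a*b) * hFeq
  · -- F = -2M
    subst h
    exfalso
    have hFeq : a*dx^2 + b*dy^2 + c*dz^2 = -2*(a*b*c) := by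
      rw [← hF, hk, hMdef]; ring
    have hFe : F = a*dx^2 + b*dy^2 + c*dz^2 := hF
    have hFM : F = -2*M := by rw [hk]; ring
    have hdx0 : a*dx^2 = 0 := by linarith [hlb, hxnn]
    have heq1 : b*dy^2 = -M := by linarith [hlb1, hlb2, hdx0]
    have hdy2 : dy^2 = a*(-c) := by
      have : b * dy^2 = b * (a*(-c)) := by
        rw [heq1, hMdef]; ring
      exact mul_left_cancel₀ hb.ne this
    have hsac : Squarefree (a * (-c)) := by
      rw [squarefree_mul_iff]
      exact ⟨(hac.neg_right).isRelPrime, hsa, squarefree_neg' hsc⟩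
    have hone := sq_eq_of_squarefree hsac
      (mul_pos ha (by linarith : (0:ℤ) < -c)).ne' hdy2
    refine hac1 ⟨Int.eq_one_of_mul_eq_one_right ha.le hone, ?_⟩
    have := Int.eq_one_of_mul_eq_one_left (by linarith : (0:ℤ) ≤ -c) hone
    linarith

lemma rep_step (a b c q1 q2 q3 X Y Z n s t : ℤ)
    (hq : a*q1^2+b*q2^2+c*q3^2 = 0)
    (hS : a*q1*X + b*q2*Y + c*q3*Z = s)
    (hn : n = 2*t*s + (a*X^2+b*Y^2+c*Z^2)) :
    a*(t*q1+X)^2 + b*(t*q2+Y)^2 + c*(t*q3+Z)^2 = n := by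
  linear_combination t^2*hq + 2*t*hS - hn

-- case: n - F odd and E1 odd
lemma case_oddE (a b c q1 q2 q3 r1 r2 r3 n : ℤ)
    (hq : a*q1^2+b*q2^2+c*q3^2 = 0)
    (hv1 : a*q1*r1 + b*q2*r2 + c*q3*r3 = 1)
    (hodd : ¬ (2:ℤ) ∣ (n - (a*r1^2+b*r2^2+c*r3^2)))
    (hE : ¬ (2:ℤ) ∣ (a - 2*(a*q1)*(a*r1) + (a*q1)^2*(a*r1^2+b*r2^2+c*r3^2))) :
    ∃ x y z : ℤ, a*x^2+b*y^2+c*z^2 = n := by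
  obtain ⟨k, hk⟩ : ∃ k, n - (a*r1^2+b*r2^2+c*r3^2) = 2*k+1 := by
    rcases Int.even_or_odd (n - (a*r1^2+b*r2^2+c*r3^2)) with ⟨r, hr⟩ | ⟨r, hr⟩
    · exact absurd ⟨r, by linarith⟩ hodd
    · exact ⟨r, hr⟩
  obtain ⟨l, hl⟩ : ∃ l,
      (a - 2*(a*q1)*(a*r1) + (a*q1)^2*(a*r1^2+b*r2^2+c*r3^2)) = 2*l+1 := by
    rcases Int.even_or_odd (a - 2*(a*q1)*(a*r1) + (a*q1)^2*(a*r1^2+b*r2^2+c*r3^2))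
      with ⟨r, hr⟩ | ⟨r, hr⟩
    · exact absurd ⟨r, by linarith⟩ hE
    · exact ⟨r, hr⟩
  set X := r1 + (1 - (a*q1)*r1) with hX
  set Y := r2 - (a*q1)*r2 with hY
  set Z := r3 - (a*q1)*r3 with hZ
  set B := a*r1*(1-(a*q1)*r1) - b*r2*((a*q1)*r2) - c*r3*((a*q1)*r3) with hB
  refine ⟨(k - l - B)*q1 + X, (k - l - B)*q2 + Y, (k - l - B)*q3 + Z,
    rep_step a b c q1 q2 q3 X Y Z n 1 (k - l - B) hq ?_ ?_⟩
  · rw [hX, hY, hZ]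
    linear_combination (1 - a*q1)*hv1
  · rw [hX, hY, hZ, hB]
    linear_combination hk - hl

-- case: n ≡ 2 mod 4 and a ≡ 2 mod 4
lemma case_even2 (a b c q1 q2 q3 r1 r2 r3 n : ℤ)
    (hq : a*q1^2+b*q2^2+c*q3^2 = 0)
    (hv1 : a*q1*r1 + b*q2*r2 + c*q3*r3 = 1)
    (h2a : (2:ℤ) ∣ a) (h4a : ¬ (4:ℤ) ∣ a)
    (hn4 : ∃ k, n = 4*k + 2) :
    ∃ x y z : ℤ, a*x^2+b*y^2+c*z^2 = n := by
  obtain ⟨k, hk⟩ := hn4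
  obtain ⟨m, hm⟩ : ∃ m, a = 4*m + 2 := by
    obtain ⟨a', ha'⟩ := h2a
    refine ⟨(a' - 1)/2, ?_⟩
    rcases Int.even_or_odd a' with ⟨r, hr⟩ | ⟨r, hr⟩
    · exact absurd ⟨r, by omega⟩ h4a
    · omega
  set F := a*r1^2+b*r2^2+c*r3^2 with hF
  -- E1 - a = 4 * W1
  obtain ⟨a2, ha2⟩ : ∃ a2, a = 2*a2 := h2a
  have hW1 : (a - 2*(a*q1)*(a*r1) + (a*q1)^2*F) - a
      = 4*(a2^2*(q1^2*F - 2*q1*r1)) := by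
    linear_combination ((a + 2*a2)*(q1^2*F - 2*q1*r1))*ha2
  set W1 := a2^2*(q1^2*F - 2*q1*r1) with hW1def
  set B := a*r1*(1-(a*q1)*r1) - b*r2*((a*q1)*r2) - c*r3*((a*q1)*r3) with hB
  set X := 2*r1 + (1 - (a*q1)*r1) with hX
  set Y := 2*r2 - (a*q1)*r2 with hY
  set Z := 2*r3 - (a*q1)*r3 with hZ
  set t := k - m - F - W1 - B with ht
  refine ⟨t*q1 + X, t*q2 + Y, t*q3 + Z,
    rep_step a b c q1 q2 q3 X Y Z n 2 t hq ?_ ?_⟩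
  · rw [hX, hY, hZ]
    linear_combination (2 - a*q1)*hv1
  · rw [hX, hY, hZ, ht, hB, hW1def, hF]
    linear_combination hk - hm - hW1

lemma two_not_unit : ¬ IsUnit (2:ℤ) := by
  rw [Int.isUnit_iff]; omega

lemma represent (a b c q1 q2 q3 r1 r2 r3 : ℤ)
    (hsa : Squarefree a) (hsb : Squarefree b) (hsc : Squarefree c)
    (hab : IsCoprime a b) (hac : IsCoprime a c) (hbc : IsCoprime b c)
    (hq : a*q1^2+b*q2^2+c*q3^2 = 0)
    (hv1 : a*q1*r1 + b*q2*r2 + c*q3*r3 = 1)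
    (n : ℤ) : ∃ x y z : ℤ, a*x^2+b*y^2+c*z^2 = n := by
  by_cases hC1 : (2:ℤ) ∣ (n - (a*r1^2+b*r2^2+c*r3^2))
  · obtain ⟨t, ht⟩ := hC1
    exact ⟨t*q1+r1, t*q2+r2, t*q3+r3,
      rep_step a b c q1 q2 q3 r1 r2 r3 n 1 t hq hv1 (by linear_combination ht)⟩
  by_cases hE1 : (2:ℤ) ∣ (a - 2*(a*q1)*(a*r1) + (a*q1)^2*(a*r1^2+b*r2^2+c*r3^2))
  case neg => exact case_oddE a b c q1 q2 q3 r1 r2 r3 n hq hv1 hC1 hE1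
  by_cases hE2 : (2:ℤ) ∣ (b - 2*(b*q2)*(b*r2) + (b*q2)^2*(a*r1^2+b*r2^2+c*r3^2))
  case neg =>
    obtain ⟨x, y, z, hxyz⟩ := case_oddE b a c q2 q1 q3 r2 r1 r3 n
      (by linear_combination hq) (by linear_combination hv1)
      (by rw [show b*r2^2+a*r1^2+c*r3^2 = a*r1^2+b*r2^2+c*r3^2 from by ring]; exact hC1)
      (by rw [show b*r2^2+a*r1^2+c*r3^2 = a*r1^2+b*r2^2+c*r3^2 from by ring]; exact hE2)
    exact ⟨y, x, z, by linear_combination hxyz⟩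
  by_cases hE3 : (2:ℤ) ∣ (c - 2*(c*q3)*(c*r3) + (c*q3)^2*(a*r1^2+b*r2^2+c*r3^2))
  case neg =>
    obtain ⟨x, y, z, hxyz⟩ := case_oddE c b a q3 q2 q1 r3 r2 r1 n
      (by linear_combination hq) (by linear_combination hv1)
      (by rw [show c*r3^2+b*r2^2+a*r1^2 = a*r1^2+b*r2^2+c*r3^2 from by ring]; exact hC1)
      (by rw [show c*r3^2+b*r2^2+a*r1^2 = a*r1^2+b*r2^2+c*r3^2 from by ring]; exact hE3)
    exact ⟨z, y, x, by linear_combination hxyz⟩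
  -- all E_i even, n - F odd
  have hFodd : ¬ (2:ℤ) ∣ (a*r1^2+b*r2^2+c*r3^2) := by
    intro ⟨f1, hf1⟩
    obtain ⟨e1, he1⟩ := hE1
    obtain ⟨e2, he2⟩ := hE2
    have h2A : (2:ℤ) ∣ a :=
      ⟨e1 + (a*q1)*(a*r1) - (a*q1)^2*f1, by linear_combination he1 - (a*q1)^2*hf1⟩
    have h2B : (2:ℤ) ∣ b :=
      ⟨e2 + (b*q2)*(b*r2) - (b*q2)^2*f1, by linear_combination he2 - (b*q2)^2*hf1⟩
    exact two_not_unit (hab.isUnit_of_dvd' h2A h2B)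
  obtain ⟨kF, hkF⟩ : ∃ kF, (a*r1^2+b*r2^2+c*r3^2) = 2*kF+1 := by
    rcases Int.even_or_odd (a*r1^2+b*r2^2+c*r3^2) with ⟨r, hr⟩ | ⟨r, hr⟩
    · exact absurd ⟨r, by linarith⟩ hFodd
    · exact ⟨r, hr⟩
  obtain ⟨kn, hkn⟩ : ∃ kn, n - (a*r1^2+b*r2^2+c*r3^2) = 2*kn+1 := by
    rcases Int.even_or_odd (n - (a*r1^2+b*r2^2+c*r3^2)) with ⟨r, hr⟩ | ⟨r, hr⟩
    · exact absurd ⟨r, by linarith⟩ hC1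
    · exact ⟨r, hr⟩
  rcases Int.even_or_odd (kF + kn + 1) with ⟨s, hs⟩ | ⟨s, hs⟩
  · -- n = 4s
    have hn4 : n = 4*s := by linear_combination hkF + hkn + 2*hs
    refine ⟨(s - (a*r1^2+b*r2^2+c*r3^2))*q1 + 2*r1,
      (s - (a*r1^2+b*r2^2+c*r3^2))*q2 + 2*r2,
      (s - (a*r1^2+b*r2^2+c*r3^2))*q3 + 2*r3,
      rep_step a b c q1 q2 q3 (2*r1) (2*r2) (2*r3) n 2 _ hq
        (by linear_combination 2*hv1) (by linear_combination hn4)⟩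
  · -- n = 4s + 2
    have hn2 : n = 4*s + 2 := by linear_combination hkF + hkn + 2*hs
    by_cases h2a : (2:ℤ) ∣ a
    · have h4a : ¬(4:ℤ) ∣ a := by
        intro ⟨w, hw⟩
        exact two_not_unit (hsa 2 ⟨w, by linarith⟩)
      exact case_even2 a b c q1 q2 q3 r1 r2 r3 n hq hv1 h2a h4a ⟨s, hn2⟩
    by_cases h2b : (2:ℤ) ∣ b
    · have h4b : ¬(4:ℤ) ∣ b := by
        intro ⟨w, hw⟩
        exact two_not_unit (hsb 2 ⟨w, by linarith⟩)
      obtain ⟨x, y, z, hxyz⟩ := case_even2 b a c q2 q1 q3 r2 r1 r3 n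
        (by linear_combination hq) (by linear_combination hv1) h2b h4b ⟨s, hn2⟩
      exact ⟨y, x, z, by linear_combination hxyz⟩
    by_cases h2c : (2:ℤ) ∣ c
    · have h4c : ¬(4:ℤ) ∣ c := by
        intro ⟨w, hw⟩
        exact two_not_unit (hsc 2 ⟨w, by linarith⟩)
      obtain ⟨x, y, z, hxyz⟩ := case_even2 c b a q3 q2 q1 r3 r2 r1 n
        (by linear_combination hq) (by linear_combination hv1) h2c h4c ⟨s, hn2⟩
      exact ⟨z, y, x, by linear_combination hxyz⟩
    · -- a, b, c all odd: derive contradiction via parities of q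
      exfalso
      have hq1odd : ¬ (2:ℤ) ∣ q1 := by
        intro ⟨w, hw⟩
        obtain ⟨e1, he1⟩ := hE1
        exact h2a ⟨e1 + (a*q1)*(a*r1) - 2*a^2*w^2*(a*r1^2+b*r2^2+c*r3^2),
          by linear_combination he1
            - a^2*(a*r1^2+b*r2^2+c*r3^2)*(q1+2*w)*hw⟩
      have hq2odd : ¬ (2:ℤ) ∣ q2 := by
        intro ⟨w, hw⟩
        obtain ⟨e2, he2⟩ := hE2
        exact h2b ⟨e2 + (b*q2)*(b*r2) - 2*b^2*w^2*(a*r1^2+b*r2^2+c*r3^2),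
          by linear_combination he2
            - b^2*(a*r1^2+b*r2^2+c*r3^2)*(q2+2*w)*hw⟩
      have hq3odd : ¬ (2:ℤ) ∣ q3 := by
        intro ⟨w, hw⟩
        obtain ⟨e3, he3⟩ := hE3
        exact h2c ⟨e3 + (c*q3)*(c*r3) - 2*c^2*w^2*(a*r1^2+b*r2^2+c*r3^2),
          by linear_combination he3
            - c^2*(a*r1^2+b*r2^2+c*r3^2)*(q3+2*w)*hw⟩
      obtain ⟨A, hA⟩ : ∃ A, a = 2*A+1 := by
        rcases Int.even_or_odd a with ⟨r, hr⟩ | ⟨r, hr⟩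
        · exact absurd ⟨r, by linarith⟩ h2a
        · exact ⟨r, hr⟩
      obtain ⟨B, hB⟩ : ∃ B, b = 2*B+1 := by
        rcases Int.even_or_odd b with ⟨r, hr⟩ | ⟨r, hr⟩
        · exact absurd ⟨r, by linarith⟩ h2b
        · exact ⟨r, hr⟩
      obtain ⟨C, hC⟩ : ∃ C, c = 2*C+1 := by
        rcases Int.even_or_odd c with ⟨r, hr⟩ | ⟨r, hr⟩
        · exact absurd ⟨r, by linarith⟩ h2c
        · exact ⟨r, hr⟩
      obtain ⟨Q1, hQ1⟩ : ∃ Q1, q1 = 2*Q1+1 := by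
        rcases Int.even_or_odd q1 with ⟨r, hr⟩ | ⟨r, hr⟩
        · exact absurd ⟨r, by linarith⟩ hq1odd
        · exact ⟨r, hr⟩
      obtain ⟨Q2, hQ2⟩ : ∃ Q2, q2 = 2*Q2+1 := by
        rcases Int.even_or_odd q2 with ⟨r, hr⟩ | ⟨r, hr⟩
        · exact absurd ⟨r, by linarith⟩ hq2odd
        · exact ⟨r, hr⟩
      obtain ⟨Q3, hQ3⟩ : ∃ Q3, q3 = 2*Q3+1 := by
        rcases Int.even_or_odd q3 with ⟨r, hr⟩ | ⟨r, hr⟩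
        · exact absurd ⟨r, by linarith⟩ hq3odd
        · exact ⟨r, hr⟩
      -- now hq : odd + odd + odd = 0, impossible
      have hodd1 : Odd (a*q1^2) := (Int.odd_iff.mpr (by omega)).mul
        ((Int.odd_iff.mpr (by omega)).pow)
      have hodd2 : Odd (b*q2^2) := (Int.odd_iff.mpr (by omega)).mul
        ((Int.odd_iff.mpr (by omega)).pow)
      have hodd3 : Odd (c*q3^2) := (Int.odd_iff.mpr (by omega)).mul
        ((Int.odd_iff.mpr (by omega)).pow)
      have : Odd ((a*q1^2 + b*q2^2) + c*q3^2) := (hodd1.add_odd hodd2).add_odd hodd3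
      rw [show a*q1^2 + b*q2^2 + c*q3^2 = (a*q1^2 + b*q2^2) + c*q3^2 from by ring] at hq
      rw [hq] at this
      simpa using this

lemma coprime_not_dvd' {a b : ℤ} (hab : IsCoprime a b) {p : ℕ} (hp : p.Prime)
    (hpa : (p:ℤ) ∣ a) : ¬ (p:ℤ) ∣ b := by
  intro hpb
  obtain ⟨u, v, huv⟩ := hab
  have : (p:ℤ) ∣ 1 := by
    rw [← huv]; exact dvd_add (hpa.mul_left u) (hpb.mul_left v)
  have := Int.le_of_dvd one_pos this
  have := hp.two_le
  omega

-- if a prime divides two coordinates of a primitive isotropic vector, contradiction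
lemma no_common_pair {a b c q1 q2 q3 : ℤ} (hsc : Squarefree c)
    (hq : a*q1^2+b*q2^2+c*q3^2 = 0) {r : ℕ} (hr : r.Prime)
    (h3 : ¬ (r:ℤ) ∣ q3) (h1 : (r:ℤ) ∣ q1) (h2 : (r:ℤ) ∣ q2) : False := by
  have hrp : Prime (r:ℤ) := Nat.prime_iff_prime_int.mp hr
  obtain ⟨s1, hs1⟩ := h1
  obtain ⟨s2, hs2⟩ := h2
  have hdvd : (r:ℤ)*(r:ℤ) ∣ c*q3^2 := by
    refine ⟨-(a*s1^2 + b*s2^2), ?_⟩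
    linear_combination hq - a*(q1 + (r:ℤ)*s1)*hs1 - b*(q2 + (r:ℤ)*s2)*hs2
  -- r ∣ c
  have hrc : (r:ℤ) ∣ c := by
    have : (r:ℤ) ∣ c*(q3*q3) := by
      refine dvd_trans ⟨(r:ℤ), rfl⟩ ?_
      convert hdvd using 2; rfl; ring
    rcases hrp.dvd_mul.mp this with h | h
    · exact h
    · rcases hrp.dvd_mul.mp h with h' | h' <;> exact absurd h' h3
  obtain ⟨c', hc'⟩ := hrc
  have hrc' : (r:ℤ) ∣ c' := by
    have h4 : (r:ℤ) ∣ c'*(q3*q3) := by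
      obtain ⟨w, hw⟩ := hdvd
      refine ⟨w, ?_⟩
      have hrne : (r:ℤ) ≠ 0 := Int.natCast_ne_zero.2 hr.ne_zero
      apply mul_left_cancel₀ hrne
      linear_combination hw - (q3^2)*hc'
    rcases hrp.dvd_mul.mp h4 with h | h
    · exact h
    · rcases hrp.dvd_mul.mp h with h' | h' <;> exact absurd h' h3
  obtain ⟨c'', hc''⟩ := hrc'
  exact hrp.not_unit (hsc (r:ℤ) ⟨c'', by rw [hc', hc'']; ring⟩)

lemma universal_of_isotropic (a b c : ℤ)
    (hsa : Squarefree a) (hsb : Squarefree b) (hsc : Squarefree c)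
    (hab : IsCoprime a b) (hac : IsCoprime a c) (hbc : IsCoprime b c)
    (hrep : ∀ (a' b' c' q1 q2 q3 r1 r2 r3 : ℤ),
      Squarefree a' → Squarefree b' → Squarefree c' →
      IsCoprime a' b' → IsCoprime a' c' → IsCoprime b' c' →
      a'*q1^2+b'*q2^2+c'*q3^2 = 0 →
      a'*q1*r1 + b'*q2*r2 + c'*q3*r3 = 1 →
      ∀ n : ℤ, ∃ x y z : ℤ, a'*x^2+b'*y^2+c'*z^2 = n)
    (p1 p2 p3 : ℤ) (hpnz : ¬(p1 = 0 ∧ p2 = 0 ∧ p3 = 0))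
    (hp : a*p1^2 + b*p2^2 + c*p3^2 = 0) :
    ∀ n : ℤ, ∃ x y z : ℤ, a*x^2+b*y^2+c*z^2 = n := by
  have hg0 : Int.gcd (↑(Int.gcd p1 p2)) p3 ≠ 0 := by
    intro h0
    obtain ⟨h1, h2⟩ := Int.gcd_eq_zero_iff.mp h0
    have h3 : Int.gcd p1 p2 = 0 := by exact_mod_cast h1
    obtain ⟨h4, h5⟩ := Int.gcd_eq_zero_iff.mp h3
    exact hpnz ⟨h4, h5, h2⟩
  set g : ℕ := Int.gcd (↑(Int.gcd p1 p2)) p3 with hgdef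
  have hgd1 : (g:ℤ) ∣ p1 := dvd_trans (Int.gcd_dvd_left _ _) (Int.gcd_dvd_left _ _)
  have hgd2 : (g:ℤ) ∣ p2 := dvd_trans (Int.gcd_dvd_left _ _) (Int.gcd_dvd_right _ _)
  have hgd3 : (g:ℤ) ∣ p3 := Int.gcd_dvd_right _ _
  obtain ⟨q1, hq1⟩ := hgd1
  obtain ⟨q2, hq2⟩ := hgd2
  obtain ⟨q3, hq3⟩ := hgd3
  have hgz : (g:ℤ) ≠ 0 := Int.natCast_ne_zero.2 hg0
  have hq : a*q1^2+b*q2^2+c*q3^2 = 0 := by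
    have h0 : (g:ℤ)^2 * (a*q1^2+b*q2^2+c*q3^2) = 0 := by
      rw [hq1, hq2, hq3] at hp
      linear_combination hp
    exact (mul_eq_zero.mp h0).resolve_left (pow_ne_zero 2 hgz)
  have hprim : ∀ r : ℕ, r.Prime → ¬((r:ℤ) ∣ q1 ∧ (r:ℤ) ∣ q2 ∧ (r:ℤ) ∣ q3) := by
    rintro r hr ⟨⟨s1, hs1⟩, ⟨s2, hs2⟩, ⟨s3, hs3⟩⟩
    have hd1 : ((g*r : ℕ):ℤ) ∣ p1 := ⟨s1, by push_cast; rw [hq1, hs1]; ring⟩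
    have hd2 : ((g*r : ℕ):ℤ) ∣ p2 := ⟨s2, by push_cast; rw [hq2, hs2]; ring⟩
    have hd3 : ((g*r : ℕ):ℤ) ∣ p3 := ⟨s3, by push_cast; rw [hq3, hs3]; ring⟩
    have hdg : ((g*r : ℕ):ℤ) ∣ (↑(Int.gcd p1 p2) : ℤ) := Int.dvd_coe_gcd hd1 hd2
    have hdg2 : ((g*r : ℕ):ℤ) ∣ (g:ℤ) := by
      rw [hgdef]
      exact Int.dvd_coe_gcd hdg hd3
    have : (g*r : ℕ) ∣ g := Int.ofNat_dvd.mp (by exact_mod_cast hdg2)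
    have hle := Nat.le_of_dvd (Nat.pos_of_ne_zero hg0) this
    have := hr.two_le
    nlinarith [Nat.pos_of_ne_zero hg0]
  have hp12 : ∀ r : ℕ, r.Prime → ¬((r:ℤ) ∣ q1 ∧ (r:ℤ) ∣ q2) := by
    rintro r hr ⟨h1, h2⟩
    exact no_common_pair hsc hq hr (fun h3 => hprim r hr ⟨h1, h2, h3⟩) h1 h2
  have hp13 : ∀ r : ℕ, r.Prime → ¬((r:ℤ) ∣ q1 ∧ (r:ℤ) ∣ q3) := by
    rintro r hr ⟨h1, h3⟩
    exact no_common_pair hsb (by linear_combination hq : a*q1^2+c*q3^2+b*q2^2 = 0) hr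
      (fun h2 => hprim r hr ⟨h1, h2, h3⟩) h1 h3
  have hp23 : ∀ r : ℕ, r.Prime → ¬((r:ℤ) ∣ q2 ∧ (r:ℤ) ∣ q3) := by
    rintro r hr ⟨h2, h3⟩
    exact no_common_pair hsa (by linear_combination hq : b*q2^2+c*q3^2+a*q1^2 = 0) hr
      (fun h1 => hprim r hr ⟨h1, h2, h3⟩) h2 h3
  -- triple gcd of (a q1, b q2, c q3) is 1
  have hGcd : Int.gcd (↑(Int.gcd (a*q1) (b*q2))) (c*q3) = 1 := by
    by_contra hne
    obtain ⟨r, hr, hrd⟩ := Nat.exists_prime_and_dvd hne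
    have hrp : Prime (r:ℤ) := Nat.prime_iff_prime_int.mp hr
    have hrdz : ((r:ℕ):ℤ) ∣ (↑(Int.gcd (↑(Int.gcd (a*q1) (b*q2))) (c*q3)) : ℤ) :=
      Int.natCast_dvd_natCast.mpr hrd
    have hr3 : (r:ℤ) ∣ c*q3 := dvd_trans hrdz (Int.gcd_dvd_right _ _)
    have hr12 : (r:ℤ) ∣ (↑(Int.gcd (a*q1) (b*q2)) : ℤ) := dvd_trans hrdz (Int.gcd_dvd_left _ _)
    have hr1 : (r:ℤ) ∣ a*q1 := dvd_trans hr12 (Int.gcd_dvd_left _ _)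
    have hr2 : (r:ℤ) ∣ b*q2 := dvd_trans hr12 (Int.gcd_dvd_right _ _)
    by_cases hdq1 : (r:ℤ) ∣ q1
    · by_cases hdq2 : (r:ℤ) ∣ q2
      · exact hp12 r hr ⟨hdq1, hdq2⟩
      · by_cases hdq3 : (r:ℤ) ∣ q3
        · exact hp13 r hr ⟨hdq1, hdq3⟩
        · have hb' : (r:ℤ) ∣ b := (hrp.dvd_mul.mp hr2).resolve_right hdq2
          have hc' : (r:ℤ) ∣ c := (hrp.dvd_mul.mp hr3).resolve_right hdq3
          exact coprime_not_dvd' hbc hr hb' hc'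
    · have ha' : (r:ℤ) ∣ a := (hrp.dvd_mul.mp hr1).resolve_right hdq1
      by_cases hdq2 : (r:ℤ) ∣ q2
      · by_cases hdq3 : (r:ℤ) ∣ q3
        · exact hp23 r hr ⟨hdq2, hdq3⟩
        · have hc' : (r:ℤ) ∣ c := (hrp.dvd_mul.mp hr3).resolve_right hdq3
          exact coprime_not_dvd' hac hr ha' hc'
      · have hb' : (r:ℤ) ∣ b := (hrp.dvd_mul.mp hr2).resolve_right hdq2
        exact coprime_not_dvd' hab hr ha' hb'
  -- Bezout
  have hb1 := Int.gcd_eq_gcd_ab (a*q1) (b*q2)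
  have hb2 := Int.gcd_eq_gcd_ab (↑(Int.gcd (a*q1) (b*q2)) : ℤ) (c*q3)
  rw [hGcd] at hb2
  set u := Int.gcdA (a*q1) (b*q2)
  set v := Int.gcdB (a*q1) (b*q2)
  set A := Int.gcdA (↑(Int.gcd (a*q1) (b*q2)) : ℤ) (c*q3)
  set B := Int.gcdB (↑(Int.gcd (a*q1) (b*q2)) : ℤ) (c*q3)
  have hv1 : a*q1*(u*A) + b*q2*(v*A) + c*q3*B = 1 := by
    push_cast at hb2
    linear_combination -hb2 - A*hb1
  exact hrep a b c q1 q2 q3 (u*A) (v*A) B hsa hsb hsc hab hac hbc hq hv1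

lemma modeq_helper {M f g : ℤ} (h : f ≡ g [ZMOD M]) {M' f' g' : ℤ}
    (hM : M' = M) (hf : f' = f) (hg : g' = g) : f' ≡ g' [ZMOD M'] := by
  subst hM; subst hf; subst hg; exact h

lemma master (a b c : ℤ) (ha : 0 < a) (hb : b < 0) (hc : c < 0)
    (hsa : Squarefree a) (hsb : Squarefree b) (hsc : Squarefree c)
    (hab : IsCoprime a b) (hac : IsCoprime a c) (hbc : IsCoprime b c)
    (hcong : ∃ x y z : ℤ, a*x^2 + b*y^2 + c*z^2 ≡ -(a*b*c) [ZMOD (a*b*c)^2]) :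
    ∀ n : ℤ, ∃ x y z : ℤ, a*x^2+b*y^2+c*z^2 = n := by
  obtain ⟨x0, y0, z0, hc0⟩ := hcong
  have hdvd : (a*b*c)^2 ∣ (a*x0^2 + b*y0^2 + c*z0^2 + a*b*c) := by
    have h1 := hc0.dvd
    have h2 : -(a*b*c) - (a*x0^2 + b*y0^2 + c*z0^2)
        = -(a*x0^2 + b*y0^2 + c*z0^2 + a*b*c) := by ring
    rw [h2] at h1
    exact (dvd_neg).mp h1
  have hqra : ∀ p : ℕ, p.Prime → (p:ℤ) ∣ a → IsSquare (-(b*c) : ZMod p) := by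
    intro p hp hpa
    refine qr_of_cong a b c hsa hab hac p hp hpa x0 y0 z0 ?_
    exact dvd_trans (pow_dvd_pow_of_dvd (hpa.mul_right (b*c)) 2)
      (by rw [show a*(b*c) = a*b*c from by ring]; exact hdvd)
  have hqrb : ∀ p : ℕ, p.Prime → (p:ℤ) ∣ b → IsSquare (-(a*c) : ZMod p) := by
    intro p hp hpb
    refine qr_of_cong b a c hsb hab.symm hbc p hp hpb y0 x0 z0 ?_
    have h3 : b*y0^2 + a*x0^2 + c*z0^2 + b*a*c = a*x0^2 + b*y0^2 + c*z0^2 + a*b*c := by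
      ring
    rw [h3]
    exact dvd_trans (pow_dvd_pow_of_dvd (hpb.mul_right (a*c)) 2)
      (by rw [show b*(a*c) = a*b*c from by ring]; exact hdvd)
  have hqrc : ∀ p : ℕ, p.Prime → (p:ℤ) ∣ c → IsSquare (-(a*b) : ZMod p) := by
    intro p hp hpc
    have h4 := qr_of_cong c b a hsc hbc.symm hac.symm p hp hpc z0 y0 x0 ?_
    · simpa [mul_comm] using h4
    have h3 : c*z0^2 + b*y0^2 + a*x0^2 + c*b*a = a*x0^2 + b*y0^2 + c*z0^2 + a*b*c := by
      ring
    rw [h3]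
    exact dvd_trans (pow_dvd_pow_of_dvd (hpc.mul_right (b*a)) 2)
      (by rw [show c*(b*a) = a*b*c from by ring]; exact hdvd)
  have hfact := factok_abc a b c ha.ne' hb.ne hc.ne hsa hsb hsc hab hac hbc hqra hqrb hqrc
  rw [show a.natAbs * b.natAbs * c.natAbs = a.natAbs * (b.natAbs * c.natAbs)
    from mul_assoc _ _ _] at hfact
  obtain ⟨p1, p2, p3, hpnz, hp⟩ :=
    exists_isotropic a b c ha hb hc hsa hsb hsc hab hac hbc hfact
  exact universal_of_isotropic a b c hsa hsb hsc hab hac hbc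
    (fun a' b' c' q1 q2 q3 r1 r2 r3 hsa' hsb' hsc' hab' hac' hbc' hq' hv1' =>
      represent a' b' c' q1 q2 q3 r1 r2 r3 hsa' hsb' hsc' hab' hac' hbc' hq' hv1')
    p1 p2 p3 hpnz hp

theorem stmt14 (a b c : ℤ) (ha : a ≠ 0) (hb : b ≠ 0) (hc : c ≠ 0)
    (hsa : Squarefree a) (hsb : Squarefree b) (hsc : Squarefree c)
    (hab : IsCoprime a b) (hac : IsCoprime a c) (hbc : IsCoprime b c)
    (hsign : ¬ ((0 < a ∧ 0 < b ∧ 0 < c) ∨ (a < 0 ∧ b < 0 ∧ c < 0))) :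
    (∀ n : ℤ, ∃ x y z : ℤ, a * x ^ 2 + b * y ^ 2 + c * z ^ 2 = n) ↔
      (∃ x y z : ℤ, a * x ^ 2 + b * y ^ 2 + c * z ^ 2 ≡ -(a * b * c) [ZMOD (a * b * c) ^ 2]) := by
  constructor
  · intro h
    obtain ⟨x, y, z, hxyz⟩ := h (-(a*b*c))
    exact ⟨x, y, z, hxyz ▸ Int.ModEq.refl _⟩
  · intro hcong
    rcases ha.lt_or_gt with ha' | ha' <;> rcases hb.lt_or_gt with hb' | hb' <;>
      rcases hc.lt_or_gt with hc' | hc'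
    · -- (-,-,-): excluded
      exact absurd (Or.inr ⟨ha', hb', hc'⟩) hsign
    · -- (-,-,+): master c b a
      have hcong' : ∃ x y z : ℤ, c*x^2 + b*y^2 + a*z^2 ≡ -(c*b*a) [ZMOD (c*b*a)^2] := by
        obtain ⟨x, y, z, h⟩ := hcong
        exact ⟨z, y, x, modeq_helper h (by ring) (by ring) (by ring)⟩
      have g := master c b a hc' hb' ha' hsc hsb hsa hbc.symm hac.symm hab.symm hcong'
      intro n
      obtain ⟨x, y, z, h⟩ := g n
      exact ⟨z, y, x, by linear_combination h⟩
    · -- (-,+,-): master b a c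
      have hcong' : ∃ x y z : ℤ, b*x^2 + a*y^2 + c*z^2 ≡ -(b*a*c) [ZMOD (b*a*c)^2] := by
        obtain ⟨x, y, z, h⟩ := hcong
        exact ⟨y, x, z, modeq_helper h (by ring) (by ring) (by ring)⟩
      have g := master b a c hb' ha' hc' hsb hsa hsc hab.symm hbc hac hcong'
      intro n
      obtain ⟨x, y, z, h⟩ := g n
      exact ⟨y, x, z, by linear_combination h⟩
    · -- (-,+,+): negate → (+,-,-): master (-a) (-b) (-c)
      have hcong' : ∃ x y z : ℤ,
          (-a)*x^2 + (-b)*y^2 + (-c)*z^2 ≡ -((-a)*(-b)*(-c)) [ZMOD ((-a)*(-b)*(-c))^2] := by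
        obtain ⟨x, y, z, h⟩ := hcong
        exact ⟨x, y, z, modeq_helper h.neg (by ring) (by ring) (by ring)⟩
      have g := master (-a) (-b) (-c) (by linarith) (by linarith) (by linarith)
        (squarefree_neg' hsa) (squarefree_neg' hsb) (squarefree_neg' hsc)
        hab.neg_left.neg_right hac.neg_left.neg_right hbc.neg_left.neg_right hcong'
      intro n
      obtain ⟨x, y, z, h⟩ := g (-n)
      exact ⟨x, y, z, by linear_combination -h⟩
    · -- (+,-,-): master a b c
      exact master a b c ha' hb' hc' hsa hsb hsc hab hac hbc hcong
    · -- (+,-,+): negate+swap12 : master (-b) (-a) (-c)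
      have hcong' : ∃ x y z : ℤ,
          (-b)*x^2 + (-a)*y^2 + (-c)*z^2 ≡ -((-b)*(-a)*(-c)) [ZMOD ((-b)*(-a)*(-c))^2] := by
        obtain ⟨x, y, z, h⟩ := hcong
        exact ⟨y, x, z, modeq_helper h.neg (by ring) (by ring) (by ring)⟩
      have g := master (-b) (-a) (-c) (by linarith) (by linarith) (by linarith)
        (squarefree_neg' hsb) (squarefree_neg' hsa) (squarefree_neg' hsc)
        hab.symm.neg_left.neg_right hbc.neg_left.neg_right hac.neg_left.neg_right hcong'
      intro n
      obtain ⟨x, y, z, h⟩ := g (-n)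
      exact ⟨y, x, z, by linear_combination -h⟩
    · -- (+,+,-): negate+swap13 : master (-c) (-b) (-a)
      have hcong' : ∃ x y z : ℤ,
          (-c)*x^2 + (-b)*y^2 + (-a)*z^2 ≡ -((-c)*(-b)*(-a)) [ZMOD ((-c)*(-b)*(-a))^2] := by
        obtain ⟨x, y, z, h⟩ := hcong
        exact ⟨z, y, x, modeq_helper h.neg (by ring) (by ring) (by ring)⟩
      have g := master (-c) (-b) (-a) (by linarith) (by linarith) (by linarith)
        (squarefree_neg' hsc) (squarefree_neg' hsb) (squarefree_neg' hsa)
        hbc.symm.neg_left.neg_right hac.symm.neg_left.neg_right hab.symm.neg_left.neg_right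
        hcong'
      intro n
      obtain ⟨x, y, z, h⟩ := g (-n)
      exact ⟨z, y, x, by linear_combination -h⟩
    · -- (+,+,+): excluded
      exact absurd (Or.inl ⟨ha', hb', hc'⟩) hsign
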